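/- arXiv:0811.2365 — 2 statements merged into one kernel-verified Lean document; each statement's English description precedes it below -/
import Mathlib

section
/- Let p be a monic real polynomial of degree n having n distinct real roots, and let q = p′/n. Then: (a) SRemS(p,q) has no degree breakdown and all the signs ε_k in its defining recurrence are equal to +1, so that the tridiagonal matrix Td(p,q) is symmetric; (b) for every k, the real roots of p_{k+1} strictly interlace those of p_k; and (c) the Hankel matrix H_n(q/p) is positive definite. -/
open Polynomial Matrix BigOperators Finset

/-- Data witnessing that the signed remainders sequence `SRemS(p,q)` of the monic
polynomials `p` (degree `n`) and `q` (degree `n-1`) has no degree breakdown: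
a sequence of monic polynomials `P k` of degree `n - k` with `P 0 = p`, `P 1 = q`,
satisfying the recurrence `P k = (X - α_{k+1})·P (k+1) - ε_{k+1}·β_{k+1}²·P (k+2)`
with `β_{k+1} > 0` and `ε_{k+1} = ±1`, and `P (n-1) = X - α_n`. -/
structure SRemSData (n : ℕ) (p q : Polynomial ℝ) : Type where
  P : ℕ → Polynomial ℝ
  α : ℕ → ℝ
  β : ℕ → ℝ
  ε : ℕ → ℝ
  hP0 : P 0 = p
  hP1 : P 1 = q
  hmonic : ∀ k, k ≤ n → (P k).Monic
  hdeg : ∀ k, k ≤ n → (P k).natDegree = n - k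
  hrec : ∀ k, k + 2 ≤ n →
    P k = (Polynomial.X - Polynomial.C (α (k + 1))) * P (k + 1)
            - Polynomial.C (ε (k + 1) * β (k + 1) ^ 2) * P (k + 2)
  hlast : 1 ≤ n → P (n - 1) = Polynomial.X - Polynomial.C (α n)
  hβ : ∀ k, 1 ≤ k → k ≤ n - 1 → 0 < β k
  hε : ∀ k, 1 ≤ k → k ≤ n - 1 → ε k = 1 ∨ ε k = -1

/-- tridiagonal matrix -/
def tridiag (n : ℕ) (a b c : ℕ → ℝ) : Matrix (Fin n) (Fin n) ℝ :=
  Matrix.of fun i j =>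
    if (i : ℕ) = (j : ℕ) then a (n - (i : ℕ))
    else if (i : ℕ) = (j : ℕ) + 1 then b (n - 1 - (j : ℕ))
    else if (j : ℕ) = (i : ℕ) + 1 then c (n - 1 - (i : ℕ))
    else 0

/-- The tridiagonal matrix `Td(p,q)` associated to a no-degree-breakdown signed
remainders sequence. -/
def SRemSData.td {n : ℕ} {p q : Polynomial ℝ} (d : SRemSData n p q) :
    Matrix (Fin n) (Fin n) ℝ :=
  tridiag n d.α d.β fun k => d.ε k * d.β k


/-- The coefficients `(s_j)` of the expansion `q(x)/p(x) = Σ_{j≥0} s_j·x^{−j−1}` at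
infinity. -/
noncomputable def hankelSeq (n : ℕ) (p q : Polynomial ℝ) : ℕ → ℝ := fun j =>
  PowerSeries.coeff j
    (((Polynomial.reflect (n - 1) q : Polynomial ℝ) : PowerSeries ℝ) *
      ((Polynomial.reflect n p : Polynomial ℝ) : PowerSeries ℝ)⁻¹)

/-- The Hankel matrix `H_n(q/p) = (s_{i+j})_{0≤i,j≤n−1}`. -/
noncomputable def hankelMat (n : ℕ) (p q : Polynomial ℝ) : Matrix (Fin n) (Fin n) ℝ :=
  Matrix.of fun i j : Fin n => hankelSeq n p q ((i : ℕ) + (j : ℕ))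

/-- The real roots of `g` strictly interlace those of `f`: the real roots of `f` can be
listed as `x_0 < x_1 < ⋯ < x_m` and those of `g` as `y_0 < ⋯ < y_{m-1}` with
`x_i < y_i < x_{i+1}` for every `i`. -/
def StrictlyInterlaces (f g : Polynomial ℝ) : Prop :=
  ∃ m : ℕ, ∃ x : Fin (m + 1) → ℝ, ∃ y : Fin m → ℝ,
    StrictMono x ∧ StrictMono y ∧
    (∀ t : ℝ, f.IsRoot t ↔ t ∈ Set.range x) ∧
    (∀ t : ℝ, g.IsRoot t ↔ t ∈ Set.range y) ∧
    ∀ i : Fin m, x i.castSucc < y i ∧ y i < x i.succ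

lemma sign_prod {ι : Type*} [DecidableEq ι] (s : Finset ι) (f : ι → ℝ)
    (h0 : ∀ j ∈ s, f j ≠ 0) :
    0 < (-1 : ℝ) ^ (#(s.filter fun j => f j < 0)) * ∏ j ∈ s, f j := by
  induction s using Finset.induction with
  | empty => simp
  | @insert a s ha ih =>
    rw [Finset.prod_insert ha, Finset.filter_insert]
    have hfa := h0 a (Finset.mem_insert_self a s)
    have hrest := ih (fun j hj => h0 j (Finset.mem_insert_of_mem hj))
    rcases lt_or_gt_of_ne hfa with h | h
    · rw [if_pos h, Finset.card_insert_of_notMem (fun hc => ha (Finset.mem_of_mem_filter a hc)),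
        pow_succ]
      nlinarith [hrest]
    · rw [if_neg (by simpa using not_lt.2 h.le)]
      nlinarith [hrest]

lemma prodlin_monic {ι : Type*} (s : Finset ι) (x : ι → ℝ) :
    (∏ i ∈ s, (X - C (x i))).Monic :=
  monic_prod_of_monic _ _ fun i _ => monic_X_sub_C _

lemma prodlin_natDegree {ι : Type*} (s : Finset ι) (x : ι → ℝ) :
    (∏ i ∈ s, (X - C (x i))).natDegree = #s := by
  rw [natDegree_prod_of_monic _ _ fun i _ => monic_X_sub_C _]
  simp

lemma prodlin_eval {ι : Type*} (s : Finset ι) (x : ι → ℝ) (t : ℝ) :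
    (∏ i ∈ s, (X - C (x i))).eval t = ∏ i ∈ s, (t - x i) := by
  simp [eval_prod]

lemma prodlin_root_iff {ι : Type*} (s : Finset ι) (x : ι → ℝ) (t : ℝ) :
    (∏ i ∈ s, (X - C (x i))).IsRoot t ↔ ∃ i ∈ s, t = x i := by
  simp only [IsRoot.def, prodlin_eval, Finset.prod_eq_zero_iff, sub_eq_zero]

lemma SC {m : ℕ} (y : Fin (m+1) → ℝ) (hy : StrictMono y) (r : Polynomial ℝ)
    (hdeg : r.natDegree ≤ m)
    (hsign : ∀ i : Fin (m+1), 0 < (-1 : ℝ) ^ (m - (i : ℕ)) * r.eval (y i)) :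
    ∃ z : Fin m → ℝ, StrictMono z ∧ (∀ i : Fin m, y i.castSucc < z i ∧ z i < y i.succ) ∧
      0 < r.leadingCoeff ∧ r.natDegree = m ∧
      r = C r.leadingCoeff * ∏ i, (X - C (z i)) := by
  classical
  have hzex : ∀ i : Fin m, ∃ t, t ∈ Set.Ioo (y i.castSucc) (y i.succ) ∧ r.eval t = 0 := by
    intro i
    have h1 := hsign i.castSucc
    have h2 := hsign i.succ
    have hi : (i : ℕ) < m := i.isLt
    simp only [Fin.coe_castSucc, Fin.val_succ] at h1 h2
    set a := r.eval (y i.castSucc) with ha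
    set b := r.eval (y i.succ) with hb
    have hle : y i.castSucc ≤ y i.succ := (hy (Fin.castSucc_lt_succ (i := i))).le
    have hcont : ContinuousOn (fun t => r.eval t) (Set.Icc (y i.castSucc) (y i.succ)) :=
      (Polynomial.continuous r).continuousOn
    have hPQ : (-1 : ℝ) ^ (m - (i : ℕ)) * (-1 : ℝ) ^ (m - ((i : ℕ) + 1)) = -1 := by
      have hstep : m - (i : ℕ) = (m - ((i : ℕ) + 1)) + 1 := by omega
      rw [hstep, pow_succ]
      have : Odd ((m - ((i:ℕ)+1)) + (m - ((i:ℕ)+1)) + 1) := ⟨m - ((i:ℕ)+1), by ring⟩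
      calc (-1:ℝ) ^ (m - ((i:ℕ)+1)) * -1 * (-1:ℝ) ^ (m - ((i:ℕ)+1))
          = (-1:ℝ) ^ ((m - ((i:ℕ)+1)) + (m - ((i:ℕ)+1)) + 1) := by
            rw [pow_add, pow_add, pow_one]; ring
        _ = -1 := this.neg_one_pow
    have hab : a * b < 0 := by
      have hmul := mul_pos h1 h2
      have hrw : ((-1:ℝ) ^ (m - (i:ℕ)) * a) * ((-1:ℝ) ^ (m - ((i:ℕ)+1)) * b)
          = ((-1:ℝ) ^ (m - (i:ℕ)) * (-1:ℝ) ^ (m - ((i:ℕ)+1))) * (a * b) := by ring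
      rw [hrw, hPQ] at hmul
      linarith
    rcases mul_neg_iff.mp hab with ⟨ha1, hb1⟩ | ⟨ha1, hb1⟩
    · obtain ⟨t, ht, ht0⟩ := intermediate_value_Ioo' hle hcont ⟨hb1, ha1⟩
      exact ⟨t, ht, ht0⟩
    · obtain ⟨t, ht, ht0⟩ := intermediate_value_Ioo hle hcont ⟨ha1, hb1⟩
      exact ⟨t, ht, ht0⟩
  choose z hz1 hz2 using hzex
  have hzm : StrictMono z := by
    intro i j hij
    have h1 : z i < y i.succ := (hz1 i).2
    have h2 : y j.castSucc < z j := (hz1 j).1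
    have h3 : y i.succ ≤ y j.castSucc := hy.monotone (by
      simp only [Fin.le_def, Fin.val_succ, Fin.coe_castSucc]
      exact hij)
    linarith
  have hinj : Function.Injective z := hzm.injective
  have hr0 : r ≠ 0 := by
    intro h
    have := hsign (Fin.last m)
    rw [h] at this
    simp at this
  have hdm : r.natDegree = m := by
    refine le_antisymm hdeg ?_
    calc m = #(Finset.univ.image z) := by
            rw [Finset.card_image_of_injective _ hinj, Finset.card_univ, Fintype.card_fin]
      _ ≤ #r.roots.toFinset := by
            apply Finset.card_mono
            intro t ht
            obtain ⟨i, _, rfl⟩ := Finset.mem_image.mp ht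
            rw [Multiset.mem_toFinset, mem_roots hr0]
            exact hz2 i
      _ ≤ Multiset.card r.roots := r.roots.toFinset_card_le
      _ ≤ r.natDegree := r.card_roots'
  set c := r.leadingCoeff with hc
  set g : Polynomial ℝ := ∏ i, (X - C (z i)) with hgdef
  have hgmonic : g.Monic := monic_prod_of_monic _ _ fun i _ => monic_X_sub_C _
  have hgdeg : g.natDegree = m := by
    rw [hgdef, natDegree_prod_of_monic _ _ fun i _ => monic_X_sub_C _]
    simp
  have hsub_le : (r - C c * g).natDegree ≤ m := by
    refine le_trans (natDegree_sub_le _ _) ?_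
    rw [max_le_iff]
    exact ⟨le_of_eq hdm, le_trans (natDegree_C_mul_le _ _) (le_of_eq hgdeg)⟩
  have hcoeffm : (r - C c * g).coeff m = 0 := by
    rw [coeff_sub, coeff_C_mul]
    have h1 : r.coeff m = c := by rw [hc, leadingCoeff, hdm]
    have h2 : g.coeff m = 1 := by
      have := hgmonic.coeff_natDegree
      rwa [hgdeg] at this
    rw [h1, h2, mul_one, sub_self]
  have hzero : r - C c * g = 0 := by
    rcases eq_or_ne (r - C c * g) 0 with h | h
    · exact h
    · have hlt : (r - C c * g).natDegree < m := by
        refine lt_of_le_of_ne hsub_le (fun he => ?_)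
        have : (r - C c * g).leadingCoeff = 0 := by
          rw [leadingCoeff, he, hcoeffm]
        exact h (leadingCoeff_eq_zero.mp this)
      apply Polynomial.eq_zero_of_natDegree_lt_card_of_eval_eq_zero _ hinj
      · intro i
        have hgz : g.eval (z i) = 0 := by
          rw [hgdef]
          simp only [eval_prod, eval_sub, eval_X, eval_C]
          exact Finset.prod_eq_zero (Finset.mem_univ i) (sub_self _)
        simp [hz2 i, hgz]
      · rwa [Fintype.card_fin]
  have hfact : r = C c * g := by linear_combination (norm := ring_nf) hzero
  have hcpos : 0 < c := by
    have hlast := hsign (Fin.last m)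
    have : (m - ((Fin.last m : Fin (m+1)) : ℕ)) = 0 := by simp
    rw [this, pow_zero, one_mul] at hlast
    have hP : 0 < ∏ i, (y (Fin.last m) - z i) := by
      apply Finset.prod_pos
      intro i _
      have h1 : z i < y i.succ := (hz1 i).2
      have h2 : y i.succ ≤ y (Fin.last m) := hy.monotone (Fin.le_last _)
      linarith
    have hevalg : g.eval (y (Fin.last m)) = ∏ i, (y (Fin.last m) - z i) := by
      rw [hgdef]; simp [eval_prod]
    have heval : r.eval (y (Fin.last m)) = c * ∏ i, (y (Fin.last m) - z i) := by
      rw [hfact, eval_mul, eval_C, hevalg]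
    rw [heval] at hlast
    by_contra hcle
    push_neg at hcle
    have := mul_nonpos_of_nonpos_of_nonneg hcle hP.le
    linarith
  exact ⟨z, hzm, hz1, hcpos, hdm, hfact⟩

/-- next α in the signed remainder recurrence -/
noncomputable def nA (f g : Polynomial ℝ) : ℝ :=
  g.coeff (g.natDegree - 1) - f.coeff g.natDegree

/-- remainder -/
noncomputable def nR (f g : Polynomial ℝ) : Polynomial ℝ :=
  (X - C (nA f g)) * g - f

/-- monic remainder -/
noncomputable def nP (f g : Polynomial ℝ) : Polynomial ℝ :=
  C ((nR f g).leadingCoeff)⁻¹ * nR f g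

noncomputable def nB (f g : Polynomial ℝ) : ℝ := Real.sqrt ((nR f g).leadingCoeff)

noncomputable def chain (p q : Polynomial ℝ) : ℕ → Polynomial ℝ × Polynomial ℝ
  | 0 => (p, q)
  | (k+1) => ((chain p q k).2, nP (chain p q k).1 (chain p q k).2)

/-- f = ∏ of m+1 linear factors at x, g = ∏ of m at y, strictly interlacing -/
def Good (m : ℕ) (f g : Polynomial ℝ) : Prop :=
  ∃ x : Fin (m+1) → ℝ, ∃ y : Fin m → ℝ,
    StrictMono x ∧ StrictMono y ∧
    f = ∏ i, (X - C (x i)) ∧ g = ∏ i, (X - C (y i)) ∧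
    ∀ i : Fin m, x i.castSucc < y i ∧ y i < x i.succ

lemma nR_natDegree_le {m : ℕ} {f g : Polynomial ℝ} (hf : f.Monic) (hg : g.Monic)
    (hfd : f.natDegree = m + 2) (hgd : g.natDegree = m + 1) :
    (nR f g).natDegree ≤ m := by
  rw [Polynomial.natDegree_le_iff_coeff_eq_zero]
  intro N hN
  have hA : nA f g = g.coeff m - f.coeff (m+1) := by
    rw [nA, hgd]; norm_num
  have hXg : ∀ k : ℕ, (X * g).coeff (k+1) = g.coeff k := fun k => coeff_X_mul g k
  obtain ⟨K, rfl⟩ : ∃ K, N = m + 1 + K := ⟨N - (m+1), by omega⟩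
  have hexp : (nR f g).coeff (m+1+K) =
      g.coeff (m+K) - (nA f g) * g.coeff (m+1+K) - f.coeff (m+1+K) := by
    rw [nR, coeff_sub, sub_mul, coeff_sub, coeff_C_mul]
    have : (m + 1 + K) = (m + K) + 1 := by omega
    rw [this, hXg (m+K)]
  rw [hexp]
  rcases K with _ | K
  · -- N = m+1
    have h1 : g.coeff (m+1) = 1 := by
      have := hg.coeff_natDegree; rwa [hgd] at this
    simp only [Nat.add_zero] at *
    rw [h1, mul_one, hA]
    ring
  · rcases K with _ | K
    · -- N = m+2
      have h1 : g.coeff (m+1) = 1 := by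
        have := hg.coeff_natDegree; rwa [hgd] at this
      have h2 : f.coeff (m+2) = 1 := by
        have := hf.coeff_natDegree; rwa [hfd] at this
      have h3 : g.coeff (m+2) = 0 := coeff_eq_zero_of_natDegree_lt (by omega)
      have e1 : m + 1 + 1 = m + 2 := by omega
      have e2 : m + (1:ℕ) = m + 1 := by omega
      rw [e1, e2, h1, h2, h3]
      ring
    · have h1 : g.coeff (m + (K+2)) = 0 := coeff_eq_zero_of_natDegree_lt (by omega)
      have h2 : g.coeff (m + 1 + (K+2)) = 0 := coeff_eq_zero_of_natDegree_lt (by omega)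
      have h3 : f.coeff (m + 1 + (K+2)) = 0 := coeff_eq_zero_of_natDegree_lt (by omega)
      rw [h1, h2, h3]
      ring

lemma step {m : ℕ} {f g : Polynomial ℝ} (h : Good (m+1) f g) :
    0 < (nR f g).leadingCoeff ∧ nR f g = C ((nB f g)^2) * nP f g ∧ Good m g (nP f g) := by
  classical
  obtain ⟨x, y, hx, hy, hfx, hgy, hint⟩ := h
  have hfmonic : f.Monic := by rw [hfx]; exact prodlin_monic _ _
  have hgmonic : g.Monic := by rw [hgy]; exact prodlin_monic _ _
  have hfd : f.natDegree = m + 2 := by rw [hfx, prodlin_natDegree]; simp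
  have hgd : g.natDegree = m + 1 := by rw [hgy, prodlin_natDegree]; simp
  have hdegR : (nR f g).natDegree ≤ m := nR_natDegree_le hfmonic hgmonic hfd hgd
  -- sign of nR at the y i
  have hsign : ∀ i : Fin (m+1), 0 < (-1 : ℝ) ^ (m - (i : ℕ)) * (nR f g).eval (y i) := by
    intro i
    have hgz : g.eval (y i) = 0 := by
      rw [hgy, prodlin_eval]
      exact Finset.prod_eq_zero (Finset.mem_univ i) (sub_self _)
    have hevR : (nR f g).eval (y i) = -f.eval (y i) := by
      rw [nR, eval_sub, eval_mul, hgz, mul_zero, zero_sub]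
    have hevf : f.eval (y i) = ∏ j, (y i - x j) := by rw [hfx, prodlin_eval]
    have hfilt : (Finset.univ.filter fun j : Fin (m+2) => y i - x j < 0)
        = Finset.Ioi (i.castSucc) := by
      ext j
      simp only [Finset.mem_filter, Finset.mem_univ, true_and, Finset.mem_Ioi, sub_neg]
      constructor
      · intro hj
        by_contra hle
        push_neg at hle
        have h1 : x j ≤ x i.castSucc := hx.monotone hle
        have h2 : x i.castSucc < y i := (hint i).1
        linarith
      · intro hj
        have h1 : x i.succ ≤ x j := hx.monotone (by
          simp only [Fin.le_def, Fin.val_succ]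
          simpa [Fin.lt_def] using hj)
        have h2 : y i < x i.succ := (hint i).2
        linarith
    have hcard : #(Finset.univ.filter fun j : Fin (m+2) => y i - x j < 0) = m + 1 - (i:ℕ) := by
      rw [hfilt, Fin.card_Ioi]
      simp only [Fin.coe_castSucc]
      omega
    have hnz : ∀ j ∈ Finset.univ, (y i : ℝ) - x j ≠ 0 := by
      intro j _
      rcases lt_or_ge (j : ℕ) ((i:ℕ)+1) with hj | hj
      · have h1 : x j ≤ x i.castSucc := hx.monotone (by simp [Fin.le_def]; omega)
        have h2 : x i.castSucc < y i := (hint i).1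
        intro hc; nlinarith
      · have h1 : x i.succ ≤ x j := hx.monotone (by simp [Fin.le_def]; omega)
        have h2 : y i < x i.succ := (hint i).2
        intro hc; nlinarith
    have hsp := sign_prod Finset.univ (fun j : Fin (m+2) => y i - x j) hnz
    rw [hcard] at hsp
    have hexp : (-1 : ℝ) ^ (m - (i:ℕ)) * (nR f g).eval (y i)
        = (-1 : ℝ) ^ (m + 1 - (i:ℕ)) * ∏ j, (y i - x j) := by
      rw [hevR, hevf, show m + 1 - (i:ℕ) = (m - (i:ℕ)) + 1 from by
        have := i.isLt; omega, pow_succ]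
      ring
    rw [hexp]
    exact hsp
  obtain ⟨z, hzm, hz1, hcpos, hdm, hfact⟩ := SC y hy (nR f g) hdegR hsign
  set c := (nR f g).leadingCoeff with hc
  have hlcne : c ≠ 0 := ne_of_gt hcpos
  have hnPeq : nP f g = ∏ i, (X - C (z i)) := by
    rw [nP, ← hc, hfact, ← mul_assoc, ← C_mul, inv_mul_cancel₀ hlcne, C_1, one_mul]
  refine ⟨hcpos, ?_, ?_⟩
  · rw [nB, ← hc, Real.sq_sqrt hcpos.le, hnPeq]
    exact hfact
  · exact ⟨y, z, hy, hzm, hgy, hnPeq, hz1⟩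

lemma chain_good (p q : Polynomial ℝ) (m : ℕ) (h : Good m p q) :
    ∀ k, k ≤ m → Good (m - k) (chain p q k).1 (chain p q k).2 := by
  intro k
  induction k with
  | zero => intro _; simpa [chain] using h
  | succ k ih =>
    intro hk
    have hg := ih (by omega)
    have he : m - k = (m - (k+1)) + 1 := by omega
    rw [he] at hg
    have hs := (step hg).2.2
    simpa [chain] using hs

lemma base {m : ℕ} (x : Fin (m+1) → ℝ) (hx : StrictMono x) (p q : Polynomial ℝ)
    (hp : p = ∏ i, (X - C (x i)))
    (hq : q = (((m+1 : ℕ) : ℝ))⁻¹ • derivative p) :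
    Good m p q := by
  classical
  set c : ℝ := (((m+1 : ℕ) : ℝ))⁻¹ with hcdef
  have hcpos : 0 < c := by positivity
  have heval : ∀ i : Fin (m+1), q.eval (x i) = c * ∏ j ∈ Finset.univ.erase i, (x i - x j) := by
    intro i
    have hsplit : p = (X - C (x i)) * ∏ j ∈ Finset.univ.erase i, (X - C (x j)) := by
      rw [hp, ← Finset.mul_prod_erase _ _ (Finset.mem_univ i)]
    rw [hq, smul_eq_C_mul, eval_mul, eval_C, hsplit, derivative_mul]
    congr 1
    rw [eval_add, eval_mul, eval_mul]
    simp [prodlin_eval]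
  have hsign : ∀ i : Fin (m+1), 0 < (-1 : ℝ) ^ (m - (i : ℕ)) * q.eval (x i) := by
    intro i
    have hfilt : ((Finset.univ.erase i).filter fun j : Fin (m+1) => x i - x j < 0)
        = Finset.Ioi i := by
      ext j
      simp only [Finset.mem_filter, Finset.mem_erase, Finset.mem_univ, true_and,
        Finset.mem_Ioi, sub_neg, and_true]
      constructor
      · rintro ⟨hne, hlt⟩
        exact hx.lt_iff_lt.mp hlt
      · intro hij
        exact ⟨(ne_of_lt hij).symm, hx hij⟩
    have hnz : ∀ j ∈ Finset.univ.erase i, (x i : ℝ) - x j ≠ 0 := by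
      intro j hj
      have hne : j ≠ i := (Finset.mem_erase.mp hj).1
      intro hc0
      exact hne (hx.injective (show x j = x i by linarith))
    have hsp := sign_prod (Finset.univ.erase i) (fun j : Fin (m+1) => x i - x j) hnz
    rw [hfilt, Fin.card_Ioi] at hsp
    have hcrd : m + 1 - 1 - (i : ℕ) = m - (i : ℕ) := by omega
    rw [hcrd] at hsp
    rw [heval i]
    calc (0:ℝ) < c * ((-1 : ℝ) ^ (m - (i:ℕ)) * ∏ j ∈ Finset.univ.erase i, (x i - x j)) :=
          mul_pos hcpos hsp
      _ = (-1 : ℝ) ^ (m - (i:ℕ)) * (c * ∏ j ∈ Finset.univ.erase i, (x i - x j)) := by ring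
  have hpdeg : p.natDegree = m + 1 := by rw [hp, prodlin_natDegree]; simp
  have hqdeg : q.natDegree ≤ m := by
    rw [hq]
    refine le_trans (natDegree_smul_le _ _) (le_trans (natDegree_derivative_le p) ?_)
    omega
  obtain ⟨z, hzm, hz1, hlcpos, hqdm, hqfact⟩ := SC x hx q hqdeg hsign
  have hpm : p.Monic := by rw [hp]; exact prodlin_monic _ _
  have hlc1 : q.leadingCoeff = 1 := by
    rw [leadingCoeff, hqdm, hq, smul_eq_C_mul, coeff_C_mul, coeff_derivative]
    have : p.coeff (m + 1) = 1 := by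
      have := hpm.coeff_natDegree; rwa [hpdeg] at this
    rw [this, hcdef]
    push_cast
    field_simp
  rw [hlc1, C_1, one_mul] at hqfact
  exact ⟨x, z, hx, hzm, hp, hqfact, hz1⟩

lemma deriv_prodlin {ι : Type*} [DecidableEq ι] (s : Finset ι) (x : ι → ℝ) :
    derivative (∏ i ∈ s, (X - C (x i))) = ∑ i ∈ s, ∏ j ∈ s.erase i, (X - C (x j)) := by
  induction s using Finset.induction with
  | empty => simp
  | @insert a s ha ih =>
    rw [Finset.prod_insert ha, derivative_mul, Finset.sum_insert ha, Finset.erase_insert ha]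
    have h1 : derivative (X - C (x a)) = 1 := by simp
    rw [h1, one_mul, ih, Finset.mul_sum]
    congr 1
    apply Finset.sum_congr rfl
    intro i hi
    have hia : a ≠ i := fun hc => ha (hc ▸ hi)
    rw [Finset.erase_insert_of_ne hia,
      Finset.prod_insert (fun hc => ha (Finset.mem_of_mem_erase hc))]

lemma reflect_sum {ι : Type*} (s : Finset ι) (f : ι → Polynomial ℝ) (N : ℕ) :
    reflect N (∑ i ∈ s, f i) = ∑ i ∈ s, reflect N (f i) := by
  classical
  induction s using Finset.induction with
  | empty => simp [reflect_zero]
  | @insert a s ha ih => rw [Finset.sum_insert ha, Finset.sum_insert ha, reflect_add, ih]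

lemma reflect_linear (a : ℝ) : reflect 1 (X - C a) = 1 - C a * X := by
  have h : (X : Polynomial ℝ) - C a = C 1 * X ^ 1 + C (-a) * X ^ 0 := by
    simp only [map_neg, C_1, one_mul, pow_one, pow_zero, mul_one]
    ring
  rw [h, reflect_add, reflect_C_mul_X_pow, reflect_C_mul_X_pow]
  have h1 : revAt 1 1 = 0 := by simp [revAt_le]
  have h0 : revAt 1 0 = 1 := by simp [revAt_le]
  rw [h1, h0]
  simp only [map_neg, C_1, one_mul, pow_zero, pow_one]
  ring

lemma refl_prodlin {ι : Type*} (s : Finset ι) (x : ι → ℝ) :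
    reflect #s (∏ i ∈ s, (X - C (x i))) = ∏ i ∈ s, (1 - C (x i) * X) := by
  classical
  induction s using Finset.induction with
  | empty => simp [reflect_one]
  | @insert a s ha ih =>
    rw [Finset.prod_insert ha, Finset.prod_insert ha, Finset.card_insert_of_notMem ha]
    have hcomm : #s + 1 = 1 + #s := by omega
    rw [hcomm, reflect_mul _ _ (by simp [natDegree_X_sub_C]) (le_of_eq (prodlin_natDegree s x)),
      reflect_linear, ih]

lemma geom_unit (a : ℝ) :
    ((1 - C a * X : Polynomial ℝ) : PowerSeries ℝ) * PowerSeries.mk (fun j => a ^ j) = 1 := by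
  have hc : ((1 - C a * X : Polynomial ℝ) : PowerSeries ℝ)
      = 1 - PowerSeries.C a * PowerSeries.X := by
    rw [Polynomial.coe_sub, Polynomial.coe_one, Polynomial.coe_mul, Polynomial.coe_C,
      Polynomial.coe_X]
  rw [hc]
  ext k
  rcases k with _ | k
  · simp [PowerSeries.coeff_zero_eq_constantCoeff, map_sub]
  · rw [sub_mul, one_mul, map_sub, mul_assoc, PowerSeries.coeff_C_mul,
      PowerSeries.coeff_succ_X_mul, PowerSeries.coeff_mk, PowerSeries.coeff_mk]
    simp [pow_succ, PowerSeries.coeff_one]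
    ring

lemma hankelSeq_eq {m : ℕ} (x : Fin (m+1) → ℝ) (p q : Polynomial ℝ)
    (hp : p = ∏ i, (X - C (x i)))
    (hq : q = (((m+1 : ℕ) : ℝ))⁻¹ • derivative p) (j : ℕ) :
    hankelSeq (m+1) p q j = (((m+1 : ℕ) : ℝ))⁻¹ * ∑ i, x i ^ j := by
  classical
  set c : ℝ := (((m+1 : ℕ) : ℝ))⁻¹ with hcdef
  set F : Fin (m+1) → PowerSeries ℝ := (fun i => PowerSeries.mk fun k => x i ^ k) with hF
  have hcardu : #(Finset.univ : Finset (Fin (m+1))) = m + 1 := by simp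
  have hrp : reflect (m+1) p = ∏ i, (1 - C (x i) * X) := by
    have h := refl_prodlin (Finset.univ : Finset (Fin (m+1))) x
    rw [hcardu] at h
    rw [hp]; exact h
  have hderiv : derivative p = ∑ i, ∏ jj ∈ Finset.univ.erase i, (X - C (x jj)) := by
    rw [hp]; exact deriv_prodlin _ _
  have hrq : reflect m q = C c * ∑ i, ∏ jj ∈ Finset.univ.erase i, (1 - C (x jj) * X) := by
    rw [hq, smul_eq_C_mul, reflect_C_mul, hderiv, reflect_sum]
    congr 1
    apply Finset.sum_congr rfl
    intro i _
    have hce : #(Finset.univ.erase i) = m := by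
      rw [Finset.card_erase_of_mem (Finset.mem_univ i), hcardu]
      omega
    have h := refl_prodlin (Finset.univ.erase i) x
    rwa [hce] at h
  have hcastp : ((reflect (m+1) p : Polynomial ℝ) : PowerSeries ℝ)
      = ∏ i, ((1 - C (x i) * X : Polynomial ℝ) : PowerSeries ℝ) := by
    rw [hrp, ← Polynomial.coeToPowerSeries.ringHom_apply, map_prod]
    simp only [Polynomial.coeToPowerSeries.ringHom_apply]
  have hunit : ∀ i : Fin (m+1),
      ((1 - C (x i) * X : Polynomial ℝ) : PowerSeries ℝ) * F i = 1 := fun i => geom_unit (x i)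
  have hconst1 : ∀ i : Fin (m+1),
      PowerSeries.constantCoeff ((1 - C (x i) * X : Polynomial ℝ) : PowerSeries ℝ) = 1 := by
    intro i
    have : PowerSeries.coeff 0 ((1 - C (x i) * X : Polynomial ℝ) : PowerSeries ℝ)
        = (1 - C (x i) * X : Polynomial ℝ).coeff 0 := Polynomial.coeff_coe _ _
    rw [← PowerSeries.coeff_zero_eq_constantCoeff_apply, this]
    simp
  have hconst : PowerSeries.constantCoeff ((reflect (m+1) p : Polynomial ℝ) : PowerSeries ℝ) ≠ 0 := by
    rw [hcastp, map_prod, Finset.prod_congr rfl (fun i _ => hconst1 i), Finset.prod_const_one]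
    exact one_ne_zero
  have hinv : (((reflect (m+1) p : Polynomial ℝ) : PowerSeries ℝ))⁻¹ = ∏ i, F i := by
    have hmul : (∏ i, F i) * ((reflect (m+1) p : Polynomial ℝ) : PowerSeries ℝ) = 1 := by
      rw [hcastp, ← Finset.prod_mul_distrib]
      have hone : ∀ i ∈ (Finset.univ : Finset (Fin (m+1))),
          F i * ((1 - C (x i) * X : Polynomial ℝ) : PowerSeries ℝ) = 1 := by
        intro i _
        rw [mul_comm]; exact hunit i
      rw [Finset.prod_congr rfl hone, Finset.prod_const_one]
    exact ((PowerSeries.eq_inv_iff_mul_eq_one hconst).mpr hmul).symm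
  have hkey : ((reflect m q : Polynomial ℝ) : PowerSeries ℝ) *
      (((reflect (m+1) p : Polynomial ℝ) : PowerSeries ℝ))⁻¹
      = PowerSeries.C c * ∑ i, F i := by
    rw [hinv, hrq, ← Polynomial.coeToPowerSeries.ringHom_apply, _root_.map_mul, map_sum]
    simp only [map_prod, Polynomial.coeToPowerSeries.ringHom_apply, Polynomial.coe_C]
    rw [mul_assoc]
    congr 1
    rw [Finset.sum_mul]
    apply Finset.sum_congr rfl
    intro i _
    rw [← Finset.mul_prod_erase Finset.univ F (Finset.mem_univ i)]
    have hre : (∏ jj ∈ Finset.univ.erase i, ((1 - C (x jj) * X : Polynomial ℝ) : PowerSeries ℝ)) *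
        (F i * ∏ jj ∈ Finset.univ.erase i, F jj)
        = F i * ∏ jj ∈ Finset.univ.erase i,
            (((1 - C (x jj) * X : Polynomial ℝ) : PowerSeries ℝ) * F jj) := by
      rw [Finset.prod_mul_distrib]; ring
    rw [hre, Finset.prod_congr rfl (fun jj _ => hunit jj), Finset.prod_const_one, mul_one]
  have hm1 : m + 1 - 1 = m := rfl
  unfold hankelSeq
  rw [hm1, hkey, PowerSeries.coeff_C_mul, map_sum]
  congr 1
  apply Finset.sum_congr rfl
  intro i _
  rw [hF]
  exact PowerSeries.coeff_mk _ _

lemma hankel_posdef {m : ℕ} (x : Fin (m+1) → ℝ) (hx : Function.Injective x)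
    (p q : Polynomial ℝ)
    (hs : ∀ j, hankelSeq (m+1) p q j = (((m+1 : ℕ) : ℝ))⁻¹ * ∑ i, x i ^ j) :
    (hankelMat (m+1) p q).PosDef := by
  classical
  set c : ℝ := (((m+1 : ℕ) : ℝ))⁻¹ with hcdef
  have hcpos : 0 < c := by positivity
  refine Matrix.posDef_iff_dotProduct_mulVec.mpr ⟨?_, ?_⟩
  · show (hankelMat (m+1) p q)ᴴ = hankelMat (m+1) p q
    ext i j
    simp only [Matrix.conjTranspose_apply, hankelMat, Matrix.of_apply, star_trivial]
    congr 1
    omega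
  · intro v hv
    set w : Fin (m+1) → ℝ := fun l => ∑ i, v i * x l ^ (i : ℕ) with hw
    have h1 : dotProduct (star v) ((hankelMat (m+1) p q) *ᵥ v)
        = ∑ i, ∑ j, ∑ l, c * (v i * x l ^ (i : ℕ)) * (v j * x l ^ (j : ℕ)) := by
      simp only [dotProduct, Matrix.mulVec, hankelMat, Matrix.of_apply, star_trivial,
        hs, ← hcdef, pow_add]
      simp only [Finset.mul_sum, Finset.sum_mul]
      apply Finset.sum_congr rfl; intro i _
      apply Finset.sum_congr rfl; intro j _
      apply Finset.sum_congr rfl; intro l _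
      ring
    have h2 : c * ∑ l, (w l) ^ 2 = ∑ l, ∑ i, ∑ j, c * (v i * x l ^ (i:ℕ)) * (v j * x l ^ (j:ℕ)) := by
      rw [Finset.mul_sum]
      apply Finset.sum_congr rfl; intro l _
      rw [hw, sq, Finset.sum_mul_sum, Finset.mul_sum]
      apply Finset.sum_congr rfl; intro i _
      rw [Finset.mul_sum]
      apply Finset.sum_congr rfl; intro j _
      ring
    have hswap : ∀ (g : Fin (m+1) → Fin (m+1) → Fin (m+1) → ℝ),
        ∑ i, ∑ j, ∑ l, g i j l = ∑ l, ∑ i, ∑ j, g i j l := by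
      intro g
      calc ∑ i, ∑ j, ∑ l, g i j l
          = ∑ i, ∑ l, ∑ j, g i j l := Finset.sum_congr rfl (fun i _ => Finset.sum_comm)
        _ = ∑ l, ∑ i, ∑ j, g i j l := Finset.sum_comm
    have h3 : (∑ i, ∑ j, ∑ l, c * (v i * x l ^ (i:ℕ)) * (v j * x l ^ (j:ℕ)))
        = ∑ l, ∑ i, ∑ j, c * (v i * x l ^ (i:ℕ)) * (v j * x l ^ (j:ℕ)) :=
      hswap _
    have hquad : dotProduct (star v) ((hankelMat (m+1) p q) *ᵥ v) = c * ∑ l, (w l) ^ 2 := by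
      rw [h1, h3, h2]
    rw [hquad]
    have hex : ∃ l, w l ≠ 0 := by
      by_contra hall
      push_neg at hall
      set f : Polynomial ℝ := ∑ i : Fin (m+1), C (v i) * X ^ (i : ℕ) with hfd
      have hdegf : f.natDegree < m + 1 := by
        have : f.natDegree ≤ m := by
          apply Polynomial.natDegree_sum_le_of_forall_le
          intro i _
          exact le_trans (natDegree_C_mul_X_pow_le _ _) (by omega)
        omega
      have heval : ∀ l, f.eval (x l) = w l := by
        intro l
        rw [hfd, eval_finset_sum]
        apply Finset.sum_congr rfl; intro i _
        simp
      have hf0 : f = 0 := by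
        apply Polynomial.eq_zero_of_natDegree_lt_card_of_eval_eq_zero f hx
        · intro l; rw [heval]; exact hall l
        · rwa [Fintype.card_fin]
      apply hv
      funext i
      have hco : f.coeff (i : ℕ) = 0 := by rw [hf0]; simp
      rw [hfd] at hco
      rw [Polynomial.finset_sum_coeff] at hco
      simp only [coeff_C_mul, coeff_X_pow] at hco
      rw [Finset.sum_eq_single i] at hco
      · simpa using hco
      · intro i' _ hne
        have : ((i:ℕ) = (i':ℕ)) = False := by
          simp [Fin.val_eq_val]
          exact fun hc => hne (hc.symm)
        simp [this]
      · intro habs; exact absurd (Finset.mem_univ i) habs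
    obtain ⟨l0, hl0⟩ := hex
    apply mul_pos hcpos
    apply Finset.sum_pos'
    · intro l _; exact sq_nonneg _
    · refine ⟨l0, Finset.mem_univ l0, ?_⟩
      rcases hl0.lt_or_gt with h | h
      · nlinarith
      · nlinarith

lemma good_interlaces {m : ℕ} {f g : Polynomial ℝ} (h : Good m f g) :
    StrictlyInterlaces f g := by
  obtain ⟨x, y, hx, hy, hf, hg, hint⟩ := h
  refine ⟨m, x, y, hx, hy, ?_, ?_, hint⟩
  · intro t
    rw [hf, prodlin_root_iff]
    simp [Set.mem_range, eq_comm]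
  · intro t
    rw [hg, prodlin_root_iff]
    simp [Set.mem_range, eq_comm]

lemma tridiag_symm (n : ℕ) (a b c : ℕ → ℝ) (h : ∀ k, c k = b k) :
    (tridiag n a b c).IsSymm := by
  unfold Matrix.IsSymm
  ext i j
  simp only [Matrix.transpose_apply, tridiag, Matrix.of_apply, h]
  split_ifs <;> first | rfl | omega | (congr 1; omega)


/-- Let `p` be monic of degree `n` with `n` distinct real roots, and `q = p′/n`.  Then
`SRemS(p,q)` has no degree breakdown with all signs `ε_k = +1` (so `Td(p,q)` is
symmetric), the real roots of `p_{k+1}` strictly interlace those of `p_k` for every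
`k`, and `H_n(q/p)` is positive definite. -/
theorem stmt_13 (n : ℕ) (hn : 1 ≤ n) (p q : Polynomial ℝ)
    (hp : p.Monic) (hpdeg : p.natDegree = n)
    (hroots : ∃ r : Fin n → ℝ, Function.Injective r ∧
      p = ∏ i : Fin n, (Polynomial.X - Polynomial.C (r i)))
    (hq : q = (n : ℝ)⁻¹ • Polynomial.derivative p) :
    ∃ d : SRemSData n p q,
      (∀ k, 1 ≤ k → k ≤ n - 1 → d.ε k = 1) ∧
      d.td.IsSymm ∧
      (∀ k, k + 1 ≤ n → StrictlyInterlaces (d.P k) (d.P (k + 1))) ∧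
      (hankelMat n p q).PosDef := by
  classical
  obtain ⟨N, rfl⟩ : ∃ N, n = N + 1 := ⟨n - 1, by omega⟩
  obtain ⟨r, hrinj, hpfact⟩ := hroots
  -- sort the roots
  set s : Finset ℝ := Finset.univ.image r with hsdef
  have hcard : #s = N + 1 := by
    rw [hsdef, Finset.card_image_of_injective _ hrinj, Finset.card_univ, Fintype.card_fin]
  set x : Fin (N+1) → ℝ := fun i => ((s.orderIsoOfFin hcard i : s) : ℝ) with hxdef
  have hxmono : StrictMono x := by
    intro i j hij
    have := (s.orderIsoOfFin hcard).lt_iff_lt.mpr hij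
    exact this
  have hprod : ∏ i, (X - C (x i)) = ∏ i, (X - C (r i)) := by
    have h1 : ∏ i : Fin (N+1), (X - C (x i)) = ∏ t ∈ s, (X - C t) := by
      rw [← Finset.prod_coe_sort s (fun t => X - C t)]
      exact Fintype.prod_equiv (s.orderIsoOfFin hcard).toEquiv _ _ (fun i => rfl)
    have h2 : ∏ t ∈ s, (X - C t) = ∏ i : Fin (N+1), (X - C (r i)) := by
      rw [hsdef]
      exact Finset.prod_image (fun a _ b _ hab => hrinj hab)
    rw [h1, h2]
  have hp2 : p = ∏ i, (X - C (x i)) := by rw [hpfact, hprod]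
  have hq2 : q = (((N+1 : ℕ) : ℝ))⁻¹ • derivative p := hq
  have hGood0 : Good N p q := base x hxmono p q hp2 hq2
  have hchain := chain_good p q N hGood0
  set P : ℕ → Polynomial ℝ := fun k => (chain p q k).1 with hPdef
  have hP2 : ∀ k, (chain p q k).2 = P (k+1) := fun k => rfl
  have hGood' : ∀ k, k ≤ N → Good (N - k) (P k) (P (k+1)) := by
    intro k hk
    have := hchain k hk
    rwa [hP2] at this
  set α : ℕ → ℝ := fun j => if j = N + 1 then -(P N).coeff 0 else nA (P (j-1)) (P j) with hαdef
  set β : ℕ → ℝ := fun j => nB (P (j-1)) (P j) with hβdef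
  set ε : ℕ → ℝ := fun _ => (1 : ℝ) with hεdef
  have hP0 : P 0 = p := rfl
  have hP1 : P 1 = q := rfl
  have hmonic : ∀ k, k ≤ N + 1 → (P k).Monic := by
    intro k hk
    rcases Nat.lt_or_ge k (N+1) with h | h
    · obtain ⟨xx, yy, _, _, hf, _, _⟩ := hGood' k (by omega)
      rw [hf]; exact prodlin_monic _ _
    · have hk1 : k = N + 1 := by omega
      obtain ⟨xx, yy, _, _, _, hg, _⟩ := hGood' N le_rfl
      have : P (N+1) = ∏ i : Fin (N - N), (X - C (yy i)) := hg
      rw [hk1, this]; exact prodlin_monic _ _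
  have hdeg : ∀ k, k ≤ N + 1 → (P k).natDegree = (N + 1) - k := by
    intro k hk
    rcases Nat.lt_or_ge k (N+1) with h | h
    · obtain ⟨xx, yy, _, _, hf, _, _⟩ := hGood' k (by omega)
      rw [hf, prodlin_natDegree]
      simp only [Finset.card_univ, Fintype.card_fin]
      omega
    · have hk1 : k = N + 1 := by omega
      obtain ⟨xx, yy, _, _, _, hg, _⟩ := hGood' N le_rfl
      have hPN : P (N+1) = ∏ i : Fin (N - N), (X - C (yy i)) := hg
      rw [hk1, hPN, prodlin_natDegree]
      simp
  have hstep : ∀ k, k + 2 ≤ N + 1 → 0 < (nR (P k) (P (k+1))).leadingCoeff ∧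
      nR (P k) (P (k+1)) = C ((nB (P k) (P (k+1)))^2) * nP (P k) (P (k+1)) := by
    intro k hk
    have hg := hGood' k (by omega)
    have he : N - k = (N - (k+1)) + 1 := by omega
    rw [he] at hg
    obtain ⟨h1, h2, _⟩ := step hg
    exact ⟨h1, h2⟩
  have hrec : ∀ k, k + 2 ≤ N + 1 →
      P k = (X - C (α (k + 1))) * P (k + 1) - C (ε (k + 1) * β (k + 1) ^ 2) * P (k + 2) := by
    intro k hk
    have hα : α (k+1) = nA (P k) (P (k+1)) := by
      rw [hαdef]
      simp only
      rw [if_neg (by omega)]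
      norm_num
    have hPk2 : P (k+2) = nP (P k) (P (k+1)) := rfl
    have hβk : β (k+1) = nB (P k) (P (k+1)) := rfl
    rw [hα, hβk, hPk2, hεdef]
    simp only [one_mul]
    rw [← (hstep k hk).2, nR]
    ring
  have hlast : 1 ≤ N + 1 → P ((N+1) - 1) = X - C (α (N+1)) := by
    intro _
    have hg := hGood' N le_rfl
    rw [Nat.sub_self] at hg
    obtain ⟨xx, yy, _, _, hf, _, _⟩ := hg
    have hPN : P N = X - C (xx 0) := by
      rw [hf, Fin.prod_univ_one]
    have hαN : α (N+1) = xx 0 := by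
      rw [hαdef]
      simp only [if_pos rfl]
      rw [hPN]
      simp
    have : (N+1) - 1 = N := rfl
    rw [this, hαN, hPN]
  have hβpos : ∀ k, 1 ≤ k → k ≤ (N+1) - 1 → 0 < β k := by
    intro k h1 h2
    obtain ⟨K, rfl⟩ : ∃ K, k = K + 1 := ⟨k - 1, by omega⟩
    have := (hstep K (by omega)).1
    rw [hβdef]
    simp only [Nat.add_sub_cancel]
    exact Real.sqrt_pos.mpr this
  refine ⟨⟨P, α, β, ε, hP0, hP1, hmonic, hdeg, hrec, hlast, hβpos,
      fun k _ _ => Or.inl rfl⟩, fun k _ _ => rfl, ?_, ?_, ?_⟩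
  · exact tridiag_symm _ _ _ _ (fun k => one_mul _)
  · intro k hk
    exact good_interlaces (hGood' k (by omega))
  · exact hankel_posdef x hxmono.injective p q (fun j => hankelSeq_eq x p q hp2 hq2 j)
end

section
/- Let p and q be monic real polynomials of respective degrees n and n−1. Then SRemS(p,q) has no degree breakdown if and only if det(H_k(q/p)) ≠ 0 for every k ∈ {1,…,n}. -/
open Polynomial Matrix BigOperators Finset

/-- The `k`-th principal Hankel matrix `H_k(q/p) = (s_{i+j})_{0≤i,j≤k−1}`. -/
noncomputable def hankelMatk (n : ℕ) (p q : Polynomial ℝ) (k : ℕ) :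
    Matrix (Fin k) (Fin k) ℝ :=
  Matrix.of fun i j : Fin k => hankelSeq n p q ((i : ℕ) + (j : ℕ))

/- ### Auxiliary lemmas -/

lemma star_lemma (s t : ℕ → ℝ) (α : ℝ) (hs0 : s 0 = 1)
    (hrec : ∀ m, s (m+1) = α * s m + ∑ c ∈ Finset.range m, t c * s (m - 1 - c)) :
    ∀ i j, s (i+j) = s i * s j + ∑ a ∈ Finset.range i, ∑ b ∈ Finset.range j,
      s (i-1-a) * t (a+b) * s (j-1-b) := by
  intro i
  induction i with
  | zero => intro j; simp [hs0]
  | succ i IH =>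
    intro j
    have h1 : i + 1 + j = i + (j + 1) := by omega
    rw [h1, IH (j+1)]
    have e1 : ∀ a, ∑ b ∈ Finset.range (j+1), s (i-1-a) * t (a+b) * s (j+1-1-b)
        = (∑ b ∈ Finset.range j, s (i-1-a) * t (a+b+1) * s (j-1-b)) + s (i-1-a) * t a * s j := by
      intro a
      rw [Finset.sum_range_succ' (fun b => s (i-1-a) * t (a+b) * s (j+1-1-b))]
      congr 1
      · apply Finset.sum_congr rfl; intro b _
        have h2 : j+1-1-(b+1) = j-1-b := by omega
        have h3 : a+(b+1) = a+b+1 := by omega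
        rw [h2, h3]
    have e2 : ∑ a ∈ Finset.range (i+1), ∑ b ∈ Finset.range j, s (i+1-1-a) * t (a+b) * s (j-1-b)
        = (∑ a ∈ Finset.range i, ∑ b ∈ Finset.range j, s (i-1-a) * t (a+b+1) * s (j-1-b))
          + ∑ b ∈ Finset.range j, s i * t b * s (j-1-b) := by
      rw [Finset.sum_range_succ' (fun a => ∑ b ∈ Finset.range j, s (i+1-1-a) * t (a+b) * s (j-1-b))]
      congr 1
      · apply Finset.sum_congr rfl; intro a _
        apply Finset.sum_congr rfl; intro b _
        have h2 : i+1-1-(a+1) = i-1-a := by omega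
        have h3 : (a+1)+b = a+b+1 := by omega
        rw [h2, h3]
      · simp
    simp only [e1, Finset.sum_add_distrib]
    rw [e2]
    have hj : s i * s (j+1) = α * s i * s j + s i * ∑ b ∈ Finset.range j, t b * s (j-1-b) := by
      rw [hrec j]; ring
    have hi : s (i+1) * s j = α * s i * s j + s j * ∑ c ∈ Finset.range i, t c * s (i-1-c) := by
      rw [hrec i]; ring
    rw [hj, hi]
    rw [Finset.mul_sum, Finset.mul_sum]
    have h4 : ∑ a ∈ Finset.range i, s (i-1-a) * t a * s j
        = ∑ c ∈ Finset.range i, s j * (t c * s (i-1-c)) := by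
      apply Finset.sum_congr rfl; intro a _; ring
    have h5 : ∑ b ∈ Finset.range j, s i * t b * s (j-1-b)
        = ∑ b ∈ Finset.range j, s i * (t b * s (j-1-b)) := by
      apply Finset.sum_congr rfl; intro a _; ring
    rw [h4, h5]
    ring

lemma sum_range_ite (N i : ℕ) (h : i ≤ N) (f : ℕ → ℝ) :
    ∑ x ∈ Finset.range N, (if x < i then f x else 0) = ∑ x ∈ Finset.range i, f x := by
  rw [← Finset.sum_filter]
  congr 1
  ext x
  simp only [Finset.mem_filter, Finset.mem_range]
  omega

/-- Lower unitriangular connection function. -/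
def ℓfun (s : ℕ → ℝ) : ℕ → ℕ → ℝ := fun i a => if a ≤ i then s (i - a) else 0

/-- Middle block-diagonal function. -/
def dfun (t : ℕ → ℝ) : ℕ → ℕ → ℝ := fun a b =>
  if a = 0 then (if b = 0 then 1 else 0) else if b = 0 then 0 else t (a-1+(b-1))

lemma key_sum (s t : ℕ → ℝ) (m i j : ℕ) (hi : i ≤ m) (hj : j ≤ m) :
    ∑ a ∈ Finset.range (m+1), ∑ b ∈ Finset.range (m+1),
        ℓfun s i a * (dfun t a b * ℓfun s j b)
      = s i * s j + ∑ a ∈ Finset.range i, ∑ b ∈ Finset.range j,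
          s (i-1-a) * t (a+b) * s (j-1-b) := by
  rw [Finset.sum_range_succ']
  have h0 : ∑ b ∈ Finset.range (m+1), ℓfun s i 0 * (dfun t 0 b * ℓfun s j b) = s i * s j := by
    rw [Finset.sum_range_succ']
    simp [ℓfun, dfun]
  have h1 : ∀ a, ∑ b ∈ Finset.range (m+1), ℓfun s i (a+1) * (dfun t (a+1) b * ℓfun s j b)
      = ∑ b ∈ Finset.range m,
          (if a < i then (if b < j then s (i-1-a) * t (a+b) * s (j-1-b) else 0) else 0) := by
    intro a
    rw [Finset.sum_range_succ']
    have hz : ℓfun s i (a+1) * (dfun t (a+1) 0 * ℓfun s j 0) = 0 := by simp [dfun]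
    rw [hz, add_zero]
    apply Finset.sum_congr rfl
    intro b _
    simp only [ℓfun, dfun, Nat.succ_ne_zero, if_false, Nat.add_sub_cancel]
    by_cases hc1 : a < i <;> by_cases hc2 : b < j
    · rw [if_pos (show a+1 ≤ i from hc1), if_pos (show b+1 ≤ j from hc2), if_pos hc1, if_pos hc2,
        show i - (a+1) = i-1-a from by omega, show j - (b+1) = j-1-b from by omega]
      ring
    · rw [if_pos (show a+1 ≤ i from hc1), if_neg (show ¬ (b+1 ≤ j) from hc2), if_pos hc1,
        if_neg hc2]
      ring
    · rw [if_neg (show ¬ (a+1 ≤ i) from hc1), if_neg hc1]; ring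
    · rw [if_neg (show ¬ (a+1 ≤ i) from hc1), if_neg hc1]; ring
  rw [h0, Finset.sum_congr rfl (fun a _ => h1 a)]
  have step : ∀ a, ∑ b ∈ Finset.range m,
      (if a < i then (if b < j then s (i-1-a) * t (a+b) * s (j-1-b) else 0) else 0)
      = if a < i then ∑ b ∈ Finset.range j, s (i-1-a) * t (a+b) * s (j-1-b) else 0 := by
    intro a
    by_cases h : a < i
    · simp only [if_pos h]
      exact sum_range_ite m j hj _
    · simp [h]
  rw [Finset.sum_congr rfl (fun a _ => step a), sum_range_ite m i hi]
  ring

lemma hankel_det_step (s t : ℕ → ℝ) (hs0 : s 0 = 1)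
    (hstar : ∀ i j, s (i+j) = s i * s j + ∑ a ∈ Finset.range i, ∑ b ∈ Finset.range j,
      s (i-1-a) * t (a+b) * s (j-1-b)) (m : ℕ) :
    (Matrix.of fun i j : Fin (m+1) => s ((i:ℕ)+(j:ℕ))).det
      = (Matrix.of fun i j : Fin m => t ((i:ℕ)+(j:ℕ))).det := by
  set L : Matrix (Fin (m+1)) (Fin (m+1)) ℝ :=
    Matrix.of (fun i j : Fin (m+1) => ℓfun s (i:ℕ) (j:ℕ)) with hL
  set D : Matrix (Fin (m+1)) (Fin (m+1)) ℝ :=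
    Matrix.of (fun i j : Fin (m+1) => dfun t (i:ℕ) (j:ℕ)) with hD
  have hA : (Matrix.of fun i j : Fin (m+1) => s ((i:ℕ)+(j:ℕ))) = L * D * Lᵀ := by
    ext i j
    rw [Matrix.mul_apply]
    simp only [Matrix.mul_apply, Matrix.transpose_apply, Finset.sum_mul, hL, hD,
      Matrix.of_apply, mul_assoc]
    rw [Finset.sum_comm]
    have inner : ∀ y : Fin (m+1),
        ∑ x : Fin (m+1), ℓfun s (i:ℕ) (y:ℕ) * (dfun t (y:ℕ) (x:ℕ) * ℓfun s (j:ℕ) (x:ℕ))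
        = ∑ b ∈ Finset.range (m+1), ℓfun s (i:ℕ) (y:ℕ) * (dfun t (y:ℕ) b * ℓfun s (j:ℕ) b) :=
      fun y => Fin.sum_univ_eq_sum_range
        (fun b => ℓfun s (i:ℕ) (y:ℕ) * (dfun t (y:ℕ) b * ℓfun s (j:ℕ) b)) (m+1)
    rw [Finset.sum_congr rfl (fun y _ => inner y),
      Fin.sum_univ_eq_sum_range
        (fun a => ∑ b ∈ Finset.range (m+1), ℓfun s (i:ℕ) a * (dfun t a b * ℓfun s (j:ℕ) b)) (m+1),
      key_sum s t m i j (by omega) (by omega), ← hstar]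
  rw [hA, Matrix.det_mul, Matrix.det_mul, Matrix.det_transpose]
  have hdetL : L.det = 1 := by
    have htri : L.BlockTriangular OrderDual.toDual := by
      intro a b hab
      have : (a:ℕ) < (b:ℕ) := hab
      simp only [hL, Matrix.of_apply, ℓfun]
      rw [if_neg (by omega)]
    rw [Matrix.det_of_lowerTriangular L htri]
    have : ∀ a : Fin (m+1), L a a = 1 := by
      intro a; simp [hL, ℓfun, hs0]
    simp [this]
  rw [hdetL, one_mul, mul_one]
  rw [Matrix.det_succ_row_zero]
  rw [Finset.sum_eq_single 0]
  · have h00 : D 0 0 = 1 := by simp [hD, dfun]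
    rw [h00]
    have hsub : (D.submatrix Fin.succ (Fin.succAbove 0))
        = Matrix.of fun i j : Fin m => t ((i:ℕ)+(j:ℕ)) := by
      ext a b
      simp [hD, dfun, Matrix.submatrix_apply, Fin.zero_succAbove, Fin.val_succ]
    rw [hsub]
    simp
  · intro b _ hb
    have : ((b:ℕ)) ≠ 0 := by
      intro h; exact hb (Fin.ext (by rw [h, Fin.val_zero]))
    have h0b : D 0 b = 0 := by simp [hD, dfun, this, hb]
    rw [h0b]; ring
  · intro h; exact absurd (Finset.mem_univ 0) h

lemma hankelSeq_zero (n : ℕ) (p q : Polynomial ℝ)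
    (hp : p.Monic) (hpdeg : p.natDegree = n) (hq : q.Monic) (hqdeg : q.natDegree = n-1) :
    hankelSeq n p q 0 = 1 := by
  unfold hankelSeq
  rw [PowerSeries.coeff_zero_eq_constantCoeff, _root_.map_mul, PowerSeries.constantCoeff_inv,
    Polynomial.constantCoeff_coe, Polynomial.constantCoeff_coe, coeff_reflect, coeff_reflect,
    revAt_zero, revAt_zero, ← hqdeg, ← hpdeg, Polynomial.Monic.coeff_natDegree hq,
    Polynomial.Monic.coeff_natDegree hp]
  norm_num

lemma hankelSeq_rec (n : ℕ) (hn : 2 ≤ n) (p q r : Polynomial ℝ) (α : ℝ)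
    (hp : p.Monic) (hpdeg : p.natDegree = n) (hq : q.Monic) (hqdeg : q.natDegree = n-1)
    (hr : r.natDegree ≤ n-2) (heq : p = (X - C α) * q - r) :
    ∀ m, hankelSeq n p q (m+1) = α * hankelSeq n p q m
      + ∑ c ∈ Finset.range m, hankelSeq (n-1) q r c * hankelSeq n p q (m-1-c) := by
  have e1 : reflect n ((X - C α) * q) = reflect 1 (X - C α) * reflect (n-1) q := by
    have h := Polynomial.reflect_mul (X - C α) q (natDegree_X_sub_C_le α) (le_of_eq hqdeg)
    rwa [show 1 + (n-1) = n from by omega] at h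
  have e2 : reflect 1 (X - C α) = 1 - C α * X := by
    rw [show (X : Polynomial ℝ) - C α = C 1 * X ^ 1 + C (-α) * X ^ 0 from by
      simp [C_neg]; ring]
    rw [reflect_add, reflect_C_mul_X_pow, reflect_C_mul_X_pow, revAt_zero,
      revAt_le (by norm_num : 1 ≤ 1)]
    simp [C_neg]
    ring
  have e3 : reflect n r = X ^ 2 * reflect (n-2) r := by
    have h := Polynomial.reflect_mul (1 : Polynomial ℝ) r (F := 2) (G := n-2)
      (by simp) hr
    rw [one_mul, show 2 + (n-2) = n from by omega] at h
    rw [h]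
    congr 1
    rw [show (1 : Polynomial ℝ) = C 1 * X ^ 0 from by simp, reflect_C_mul_X_pow, revAt_zero]
    simp
  have hrefl : reflect n p = (1 - C α * X) * reflect (n-1) q - X ^ 2 * reflect (n-2) r := by
    rw [heq, sub_eq_add_neg, show -r = C (-1) * r from by simp, reflect_add, reflect_C_mul,
      e1, e2, e3]
    simp [C_neg]
    ring
  have hps : ((reflect n p : Polynomial ℝ) : PowerSeries ℝ)
      = (1 - PowerSeries.C α * PowerSeries.X)
          * ((reflect (n-1) q : Polynomial ℝ) : PowerSeries ℝ)
        - PowerSeries.X ^ 2 * ((reflect (n-2) r : Polynomial ℝ) : PowerSeries ℝ) := by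
    rw [hrefl]
    push_cast [Polynomial.coe_sub, Polynomial.coe_mul, Polynomial.coe_one, Polynomial.coe_pow,
      Polynomial.coe_X, Polynomial.coe_C]
    try rfl
  have hP0 : PowerSeries.constantCoeff ((reflect n p : Polynomial ℝ) : PowerSeries ℝ) = 1 := by
    rw [Polynomial.constantCoeff_coe, coeff_reflect, revAt_zero, ← hpdeg,
      Polynomial.Monic.coeff_natDegree hp]
  have hQ0 : PowerSeries.constantCoeff
      ((reflect (n-1) q : Polynomial ℝ) : PowerSeries ℝ) = 1 := by
    rw [Polynomial.constantCoeff_coe, coeff_reflect, revAt_zero, ← hqdeg,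
      Polynomial.Monic.coeff_natDegree hq]
  have hPinv : ((reflect n p : Polynomial ℝ) : PowerSeries ℝ)
      * ((reflect n p : Polynomial ℝ) : PowerSeries ℝ)⁻¹ = 1 :=
    PowerSeries.mul_inv_cancel _ (by rw [hP0]; exact one_ne_zero)
  have hQinv : ((reflect (n-1) q : Polynomial ℝ) : PowerSeries ℝ)⁻¹
      * ((reflect (n-1) q : Polynomial ℝ) : PowerSeries ℝ) = 1 :=
    PowerSeries.inv_mul_cancel _ (by rw [hQ0]; exact one_ne_zero)
  have hkey : ((reflect (n-1) q : Polynomial ℝ) : PowerSeries ℝ)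
        * ((reflect n p : Polynomial ℝ) : PowerSeries ℝ)⁻¹
      = 1 + (PowerSeries.C α * PowerSeries.X)
            * (((reflect (n-1) q : Polynomial ℝ) : PowerSeries ℝ)
              * ((reflect n p : Polynomial ℝ) : PowerSeries ℝ)⁻¹)
        + PowerSeries.X ^ 2
            * ((((reflect (n-2) r : Polynomial ℝ) : PowerSeries ℝ)
                * ((reflect (n-1) q : Polynomial ℝ) : PowerSeries ℝ)⁻¹)
              * (((reflect (n-1) q : Polynomial ℝ) : PowerSeries ℝ)
                * ((reflect n p : Polynomial ℝ) : PowerSeries ℝ)⁻¹)) := by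
    linear_combination hPinv - hps * ((reflect n p : Polynomial ℝ) : PowerSeries ℝ)⁻¹
      - (PowerSeries.X ^ 2 * ((reflect (n-2) r : Polynomial ℝ) : PowerSeries ℝ)
          * ((reflect n p : Polynomial ℝ) : PowerSeries ℝ)⁻¹) * hQinv
  intro m
  have hmain := congrArg (PowerSeries.coeff (m+1)) hkey
  show PowerSeries.coeff (m+1) (((reflect (n-1) q : Polynomial ℝ) : PowerSeries ℝ)
      * ((reflect n p : Polynomial ℝ) : PowerSeries ℝ)⁻¹)
    = α * PowerSeries.coeff m (((reflect (n-1) q : Polynomial ℝ) : PowerSeries ℝ)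
      * ((reflect n p : Polynomial ℝ) : PowerSeries ℝ)⁻¹)
    + ∑ c ∈ Finset.range m,
        PowerSeries.coeff c (((reflect (n-2) r : Polynomial ℝ) : PowerSeries ℝ)
          * ((reflect (n-1) q : Polynomial ℝ) : PowerSeries ℝ)⁻¹)
        * PowerSeries.coeff (m-1-c) (((reflect (n-1) q : Polynomial ℝ) : PowerSeries ℝ)
          * ((reflect n p : Polynomial ℝ) : PowerSeries ℝ)⁻¹)
  rw [hmain, map_add, map_add, PowerSeries.coeff_one, if_neg (Nat.succ_ne_zero m), mul_assoc,
    PowerSeries.coeff_C_mul, PowerSeries.coeff_succ_X_mul]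
  have hX2 : PowerSeries.coeff (m+1) (PowerSeries.X ^ 2
      * ((((reflect (n-2) r : Polynomial ℝ) : PowerSeries ℝ)
          * ((reflect (n-1) q : Polynomial ℝ) : PowerSeries ℝ)⁻¹)
        * (((reflect (n-1) q : Polynomial ℝ) : PowerSeries ℝ)
          * ((reflect n p : Polynomial ℝ) : PowerSeries ℝ)⁻¹)))
      = ∑ c ∈ Finset.range m,
          PowerSeries.coeff c (((reflect (n-2) r : Polynomial ℝ) : PowerSeries ℝ)
            * ((reflect (n-1) q : Polynomial ℝ) : PowerSeries ℝ)⁻¹)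
          * PowerSeries.coeff (m-1-c) (((reflect (n-1) q : Polynomial ℝ) : PowerSeries ℝ)
            * ((reflect n p : Polynomial ℝ) : PowerSeries ℝ)⁻¹) := by
    cases m with
    | zero =>
      rw [pow_two, mul_assoc, PowerSeries.coeff_succ_X_mul,
        PowerSeries.coeff_zero_eq_constantCoeff, _root_.map_mul, PowerSeries.constantCoeff_X]
      simp
    | succ m' =>
      rw [show m' + 1 + 1 = m' + 2 from rfl, PowerSeries.coeff_X_pow_mul,
        PowerSeries.coeff_mul, Finset.Nat.sum_antidiagonal_eq_sum_range_succ_mk]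
      rfl
  rw [hX2]
  ring

lemma hankelSeq_C_mul (n : ℕ) (p r : Polynomial ℝ) (c : ℝ) (j : ℕ) :
    hankelSeq n p (C c * r) j = c * hankelSeq n p r j := by
  unfold hankelSeq
  rw [reflect_C_mul, Polynomial.coe_mul, Polynomial.coe_C, mul_assoc, PowerSeries.coeff_C_mul]

lemma hankelMatk_det_one (n : ℕ) (p q : Polynomial ℝ)
    (hp : p.Monic) (hpdeg : p.natDegree = n) (hq : q.Monic) (hqdeg : q.natDegree = n-1) :
    (hankelMatk n p q 1).det = 1 := by
  rw [Matrix.det_fin_one]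
  show hankelSeq n p q (((0 : Fin 1) : ℕ) + ((0 : Fin 1) : ℕ)) = 1
  exact hankelSeq_zero n p q hp hpdeg hq hqdeg

lemma det_step (n : ℕ) (hn : 2 ≤ n) (p q r : Polynomial ℝ) (α : ℝ)
    (hp : p.Monic) (hpdeg : p.natDegree = n) (hq : q.Monic) (hqdeg : q.natDegree = n-1)
    (hr : r.natDegree ≤ n-2) (heq : p = (X - C α) * q - r) (m : ℕ) :
    (hankelMatk n p q (m+1)).det = (hankelMatk (n-1) q r m).det := by
  have hs0 : hankelSeq n p q 0 = 1 := hankelSeq_zero n p q hp hpdeg hq hqdeg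
  have hrec := hankelSeq_rec n hn p q r α hp hpdeg hq hqdeg hr heq
  have hstar := star_lemma (hankelSeq n p q) (hankelSeq (n-1) q r) α hs0 hrec
  exact hankel_det_step (hankelSeq n p q) (hankelSeq (n-1) q r) hs0 hstar m

lemma main_aux (n : ℕ) (hn : 1 ≤ n) : ∀ p q : Polynomial ℝ,
    p.Monic → p.natDegree = n → q.Monic → q.natDegree = n - 1 →
    (Nonempty (SRemSData n p q) ↔
      ∀ k, 1 ≤ k → k ≤ n → (hankelMatk n p q k).det ≠ 0) := by
  induction n, hn using Nat.le_induction with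
  | base =>
    intro p q hp hpdeg hq hqdeg
    constructor
    · intro _ k hk1 hk2
      have hk : k = 1 := by omega
      subst hk
      rw [hankelMatk_det_one 1 p q hp hpdeg hq hqdeg]
      exact one_ne_zero
    · intro _
      have hq1 : q = 1 := (Polynomial.Monic.natDegree_eq_zero hq).mp hqdeg
      refine ⟨⟨fun k => if k = 0 then p else 1, fun _ => -(p.coeff 0), fun _ => 1, fun _ => 1,
        ?_, ?_, ?_, ?_, ?_, ?_, ?_, ?_⟩⟩
      · simp
      · simp [hq1]
      · intro k hk
        by_cases h : k = 0 <;> simp [h, hp, monic_one]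
      · intro k hk
        interval_cases k <;> simp [hpdeg]
      · intro k hk; omega
      · intro _
        show p = X - C (-(p.coeff 0))
        rw [map_neg, sub_neg_eq_add]
        exact Polynomial.Monic.eq_X_add_C hp hpdeg
      · intro k h1 h2; exact absurd h2 (by omega)
      · intro k h1 h2; exact absurd h2 (by omega)
  | succ N hn1 IH =>
    intro p q hp hpdeg hq hqdeg
    have hqdeg' : q.natDegree = N := hqdeg
    constructor
    · rintro ⟨d⟩ k hk1 hkN
      have hrec0 := d.hrec 0 (by omega)
      rw [d.hP0, d.hP1] at hrec0
      have hβ1 := d.hβ 1 le_rfl (by omega)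
      have hε1 := d.hε 1 le_rfl (by omega)
      have hc : d.ε 1 * d.β 1 ^ 2 ≠ 0 := by
        rcases hε1 with h | h <;> rw [h] <;> intro hz <;> nlinarith
      have hP2monic := d.hmonic 2 (by omega)
      have hP2deg : (d.P 2).natDegree = N - 1 := d.hdeg 2 (by omega)
      -- shifted data for (N, q, d.P 2)
      have dd : SRemSData N q (d.P 2) := by
        refine ⟨fun k => d.P (k+1), fun k => d.α (k+1), fun k => d.β (k+1), fun k => d.ε (k+1),
          d.hP1, rfl, fun k hk => d.hmonic (k+1) (by omega),
          fun k hk => by rw [d.hdeg (k+1) (by omega)]; omega, fun k hk => d.hrec (k+1) (by omega),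
          ?_, fun k h1 h2 => d.hβ (k+1) (by omega) (by omega),
          fun k h1 h2 => d.hε (k+1) (by omega) (by omega)⟩
        intro h1
        show d.P (N - 1 + 1) = X - C (d.α (N + 1))
        rw [show N - 1 + 1 = N from by omega]
        exact d.hlast (by omega)
      have IHdets := (IH q (d.P 2) hq hqdeg' hP2monic hP2deg).mp ⟨dd⟩
      obtain ⟨m, rfl⟩ : ∃ m, k = m + 1 := ⟨k-1, by omega⟩
      rcases Nat.eq_zero_or_pos m with hm | hm
      · subst hm
        rw [hankelMatk_det_one (N+1) p q hp hpdeg hq hqdeg]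
        exact one_ne_zero
      · have hds := det_step (N+1) (by omega) p q (C (d.ε 1 * d.β 1 ^ 2) * d.P 2) (d.α 1)
          hp hpdeg hq hqdeg
          (le_trans (natDegree_C_mul_le _ _) (le_of_eq hP2deg)) hrec0 m
        simp only [Nat.add_sub_cancel] at hds
        rw [hds]
        have hsm : hankelMatk N q (C (d.ε 1 * d.β 1 ^ 2) * d.P 2) m
            = (d.ε 1 * d.β 1 ^ 2) • hankelMatk N q (d.P 2) m := by
          ext i j
          simp only [hankelMatk, Matrix.of_apply, Matrix.smul_apply, smul_eq_mul]
          exact hankelSeq_C_mul N q (d.P 2) _ _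
        rw [hsm, Matrix.det_smul]
        exact mul_ne_zero (pow_ne_zero _ hc) (IHdets m hm (by omega))
    · intro H
      have hN2 : 2 ≤ N + 1 := by omega
      set α₀ := q.coeff (N-1) - p.coeff N with hα₀
      set r := (X - C α₀) * q - p with hrdef
      have heq' : p = (X - C α₀) * q - r := by rw [hrdef]; ring
      have hrdeg : r.natDegree ≤ N - 1 := by
        rw [natDegree_le_iff_coeff_eq_zero]
        intro M hM
        obtain ⟨m', rfl⟩ : ∃ m', M = m' + 1 := ⟨M-1, by omega⟩
        have hm' : N - 1 ≤ m' := by omega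
        rw [hrdef, sub_mul, Polynomial.coeff_sub, Polynomial.coeff_sub, Polynomial.coeff_X_mul,
          Polynomial.coeff_C_mul]
        have hcase : m' = N - 1 ∨ m' = N ∨ N + 1 ≤ m' := by omega
        rcases hcase with h | h | h
        · rw [h]
          rw [show N - 1 + 1 = N from by omega]
          have h1 : q.coeff N = 1 := by rw [← hqdeg']; exact hq.coeff_natDegree
          rw [h1, hα₀]
          ring
        · rw [h]
          have h1 : q.coeff N = 1 := by rw [← hqdeg']; exact hq.coeff_natDegree
          have h2 : q.coeff (N+1) = 0 :=
            coeff_eq_zero_of_natDegree_lt (by omega : q.natDegree < N+1)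
          have h3 : p.coeff (N+1) = 1 := by rw [← hpdeg]; exact hp.coeff_natDegree
          rw [h1, h2, h3]
          ring
        · have h1 : q.coeff m' = 0 :=
            coeff_eq_zero_of_natDegree_lt (by omega : q.natDegree < m')
          have h2 : q.coeff (m'+1) = 0 :=
            coeff_eq_zero_of_natDegree_lt (by omega : q.natDegree < m'+1)
          have h3 : p.coeff (m'+1) = 0 :=
            coeff_eq_zero_of_natDegree_lt (by omega : p.natDegree < m'+1)
          rw [h1, h2, h3]
          ring
      have ht0 : hankelSeq N q r 0 = r.coeff (N-1) := by
        unfold hankelSeq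
        rw [PowerSeries.coeff_zero_eq_constantCoeff, _root_.map_mul, PowerSeries.constantCoeff_inv,
          Polynomial.constantCoeff_coe, Polynomial.constantCoeff_coe, coeff_reflect, coeff_reflect,
          revAt_zero, revAt_zero]
        have h1 : q.coeff N = 1 := by rw [← hqdeg']; exact hq.coeff_natDegree
        rw [h1]
        norm_num
      have hdet2 := det_step (N+1) hN2 p q r α₀ hp hpdeg hq hqdeg hrdeg heq' 1
      simp only [Nat.add_sub_cancel] at hdet2
      have hH1 : (hankelMatk N q r 1).det = r.coeff (N-1) := by
        rw [Matrix.det_fin_one]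
        show hankelSeq N q r (((0 : Fin 1) : ℕ) + ((0 : Fin 1) : ℕ)) = r.coeff (N-1)
        exact ht0
      have hc : r.coeff (N-1) ≠ 0 := by
        have h2 := H 2 (by omega) (by omega)
        rw [show (2:ℕ) = 1 + 1 from rfl, hdet2, hH1] at h2
        exact h2
      have hrnd : r.natDegree = N - 1 := le_antisymm hrdeg (le_natDegree_of_ne_zero hc)
      set c := r.coeff (N-1) with hcdef
      set P2 := C c⁻¹ * r with hP2def
      have hc' : c⁻¹ ≠ 0 := inv_ne_zero hc
      have hP2deg : P2.natDegree = N - 1 := by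
        rw [hP2def, natDegree_C_mul hc', hrnd]
      have hP2monic : P2.Monic := by
        unfold Polynomial.Monic Polynomial.leadingCoeff
        rw [hP2deg, hP2def, Polynomial.coeff_C_mul, show r.coeff (N-1) = c from rfl,
          inv_mul_cancel₀ hc]
      have hrP2 : r = C c * P2 := by
        rw [hP2def, ← mul_assoc, ← C_mul, mul_inv_cancel₀ hc, C_1, one_mul]
      have IHdets : ∀ k, 1 ≤ k → k ≤ N → (hankelMatk N q P2 k).det ≠ 0 := by
        intro k h1 h2
        have hds := det_step (N+1) hN2 p q r α₀ hp hpdeg hq hqdeg hrdeg heq' k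
        simp only [Nat.add_sub_cancel] at hds
        have hK := H (k+1) (by omega) (by omega)
        rw [hds] at hK
        have hsm : hankelMatk N q r k = c • hankelMatk N q P2 k := by
          ext i j
          simp only [hankelMatk, Matrix.of_apply, Matrix.smul_apply, smul_eq_mul]
          rw [hrP2]
          exact hankelSeq_C_mul N q P2 c _
        rw [hsm, Matrix.det_smul] at hK
        intro h0
        rw [h0, mul_zero] at hK
        exact hK rfl
      obtain ⟨d'⟩ := (IH q P2 hq hqdeg' hP2monic hP2deg).mpr IHdets
      have hsq : (if 0 < c then (1:ℝ) else -1) * Real.sqrt |c| ^ 2 = c := by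
        rw [Real.sq_sqrt (abs_nonneg c)]
        split_ifs with h
        · rw [one_mul, abs_of_pos h]
        · rw [abs_of_neg (lt_of_le_of_ne (le_of_not_gt h) hc)]
          ring
      refine ⟨⟨fun k => if k = 0 then p else d'.P (k-1),
        fun k => if k = 1 then α₀ else d'.α (k-1),
        fun k => if k = 1 then Real.sqrt |c| else d'.β (k-1),
        fun k => if k = 1 then (if 0 < c then 1 else -1) else d'.ε (k-1),
        ?_, ?_, ?_, ?_, ?_, ?_, ?_, ?_⟩⟩
      · simp
      · simp [d'.hP0]
      · intro k hk
        match k with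
        | 0 => simpa using hp
        | (k'+1) =>
          simp only [Nat.succ_ne_zero, if_false, Nat.add_sub_cancel]
          exact d'.hmonic k' (by omega)
      · intro k hk
        match k with
        | 0 => simpa using hpdeg
        | (k'+1) =>
          simp only [Nat.succ_ne_zero, if_false, Nat.add_sub_cancel]
          rw [d'.hdeg k' (by omega)]
          omega
      · intro k hk
        match k with
        | 0 =>
          show p = (X - C α₀) * d'.P 0
            - C ((if 0 < c then (1:ℝ) else -1) * Real.sqrt |c| ^ 2) * d'.P 1
          rw [hsq, d'.hP0, d'.hP1, ← hrP2]
          exact heq'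
        | (k'+1) =>
          simp only [Nat.succ_ne_zero, if_false, Nat.add_sub_cancel,
            if_neg (by omega : ¬ (k'+1+1) = 1), if_neg (by omega : ¬ (k'+1+1+1) = 1)]
          have := d'.hrec k' (by omega)
          convert this using 4
          omega
      · intro _
        show (if N = 0 then p else d'.P (N-1)) = X - C (if N + 1 = 1 then α₀ else d'.α (N+1-1))
        rw [if_neg (by omega : ¬ N = 0), if_neg (by omega : ¬ (N+1) = 1)]
        show d'.P (N-1) = X - C (d'.α N)
        exact d'.hlast (by omega)
      · intro k h1 h2
        show 0 < if k = 1 then Real.sqrt |c| else d'.β (k-1)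
        by_cases hk1 : k = 1
        · rw [if_pos hk1]
          exact Real.sqrt_pos.mpr (abs_pos.mpr hc)
        · rw [if_neg hk1]
          exact d'.hβ (k-1) (by omega) (by omega)
      · intro k h1 h2
        show (if k = 1 then (if 0 < c then (1:ℝ) else -1) else d'.ε (k-1)) = 1
          ∨ (if k = 1 then (if 0 < c then (1:ℝ) else -1) else d'.ε (k-1)) = -1
        by_cases hk1 : k = 1
        · rw [if_pos hk1]
          split_ifs <;> simp
        · rw [if_neg hk1]
          exact d'.hε (k-1) (by omega) (by omega)

/-- Let `p, q` be monic of degrees `n` and `n−1`.  Then `SRemS(p,q)` has no degree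
breakdown if and only if `det(H_k(q/p)) ≠ 0` for every `k ∈ {1,…,n}`. -/
theorem stmt_15 (n : ℕ) (hn : 1 ≤ n) (p q : Polynomial ℝ)
    (hp : p.Monic) (hpdeg : p.natDegree = n)
    (hq : q.Monic) (hqdeg : q.natDegree = n - 1) :
    Nonempty (SRemSData n p q) ↔
      ∀ k, 1 ≤ k → k ≤ n → (hankelMatk n p q k).det ≠ 0 :=
  main_aux n hn p q hp hpdeg hq hqdeg
end
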